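/- Let (H,T) be an elder vineyard and let C be a clan with root r(C). Then every ghost of C lies on the directed path in T from the root r(T) to r(C). -/

import Mathlib

/-- A directed graph on a vertex type `V`: a set of ordered pairs of distinct vertices
such that no pair of vertices is joined in both directions. -/
structure Dgraph (V : Type) where
  adj : V → V → Prop
  asym : ∀ u v, adj u v → ¬ adj v u

/-- Two distinct non-adjacent vertices `u`, `v` form a fork if there is `w` with
edges `(u,w)` and `(v,w)`. -/
def Dgraph.Fork {V : Type} (H : Dgraph V) (u v : V) : Prop :=
  u ≠ v ∧ ¬ H.adj u v ∧ ¬ H.adj v u ∧ ∃ w, H.adj u w ∧ H.adj v w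

/-- An elder graph is a directed graph with no fork. -/
def Dgraph.Elder {V : Type} (H : Dgraph V) : Prop :=
  ∀ u v, ¬ H.Fork u v

/-- `T` is an outbranching with root `r`: a directed tree with all edges directed away
from the root `r`. -/
def IsOutbranching {V : Type} (T : V → V → Prop) (r : V) : Prop :=
  (∀ v, Relation.ReflTransGen T r v) ∧ (∀ u, ¬ T u r) ∧ (∀ v, v ≠ r → ∃! u, T u v)

/-- `(H, T)` is a vineyard with root `r`. -/
def IsVineyard {V : Type} (H : Dgraph V) (T : V → V → Prop) (r : V) : Prop :=
  IsOutbranching T r ∧ (∀ u v, T u v → H.adj u v) ∧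
    ∀ u v, H.adj u v → Relation.ReflTransGen T u v ∨ Relation.ReflTransGen T v u

/-- The subgraph of `T` induced by the set `C` is an outbranching with root `rc`. -/
def OutbranchingOn {V : Type} (T : V → V → Prop) (C : Set V) (rc : V) : Prop :=
  rc ∈ C ∧
  (∀ v ∈ C, Relation.ReflTransGen (fun a b => a ∈ C ∧ b ∈ C ∧ T a b) rc v) ∧
  (∀ u ∈ C, ¬ T u rc) ∧
  (∀ v ∈ C, v ≠ rc → ∃! u, u ∈ C ∧ T u v)

/-- `C` is a clan of the vineyard `(H,T)` with root `rc`: `N^+_1(C) = C` in `H`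
(i.e. `C` is closed under out-edges of `H`) and the subgraph of `T` induced by `C`
is an outbranching rooted at `rc`. -/
def IsClanRoot {V : Type} (H : Dgraph V) (T : V → V → Prop) (C : Set V) (rc : V) : Prop :=
  (∀ u ∈ C, ∀ v, H.adj u v → v ∈ C) ∧ OutbranchingOn T C rc

/-- Ancestors of a vertex in an outbranching are linearly ordered. -/
lemma outbranching_comparable {V : Type} {T : V → V → Prop} {r : V}
    (hT : IsOutbranching T r) {a b w : V}
    (ha : Relation.ReflTransGen T a w) (hb : Relation.ReflTransGen T b w) :
    Relation.ReflTransGen T a b ∨ Relation.ReflTransGen T b a := by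
  revert ha
  induction hb with
  | refl => intro ha; exact Or.inl ha
  | @tail c w' hbc hcw ih =>
    intro ha
    rcases ha.cases_tail with rfl | ⟨c', hac', hc'w⟩
    · exact Or.inr (hbc.tail hcw)
    · have hne : w' ≠ r := by
        intro h; subst h; exact hT.2.1 c hcw
      obtain ⟨u, _, huniq⟩ := hT.2.2 w' hne
      have : c' = c := (huniq c' hc'w).trans (huniq c hcw).symm
      exact ih (this ▸ hac')

/-- A set closed under `H`-out-edges is closed under `T`-reachability. -/
lemma clan_closed {V : Type} {H : Dgraph V} {T : V → V → Prop} {C : Set V}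
    (hTH : ∀ u v, T u v → H.adj u v)
    (hcl : ∀ u ∈ C, ∀ v, H.adj u v → v ∈ C) {u v : V}
    (h : Relation.ReflTransGen T u v) (hu : u ∈ C) : v ∈ C := by
  induction h with
  | refl => exact hu
  | tail _ hcv ih => exact hcl _ ih _ (hTH _ _ hcv)

/-- In an elder vineyard `(H,T)`, every ghost of a clan `C` lies on the directed path
in `T` from the root `r(T)` to the root `r(C)` of the clan. -/
theorem ghosts_on_root_path {V : Type} [Fintype V] (H : Dgraph V) (T : V → V → Prop) (r : V)
    (helder : H.Elder) (hvine : IsVineyard H T r)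
    (C : Set V) (rc : V) (hclan : IsClanRoot H T C rc) :
    ∀ g, g ∉ C → (∃ w ∈ C, H.adj g w) →
      Relation.ReflTransGen T r g ∧ Relation.ReflTransGen T g rc := by
  obtain ⟨hT, hTH, hcomp⟩ := hvine
  obtain ⟨hcl, hrcC, hreach, _, _⟩ := hclan
  intro g hg ⟨w, hwC, hgw⟩
  refine ⟨hT.1 g, ?_⟩
  -- g is an ancestor of w in T
  have hgw' : Relation.ReflTransGen T g w := by
    rcases hcomp g w hgw with h | h
    · exact h
    · exact absurd (clan_closed hTH hcl h hwC) hg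
  -- rc is an ancestor of w in T
  have hrcw : Relation.ReflTransGen T rc w := by
    refine Relation.ReflTransGen.mono ?_ _ _ (hreach w hwC)
    exact fun a b h => h.2.2
  rcases outbranching_comparable hT hgw' hrcw with h | h
  · exact h
  · exact absurd (clan_closed hTH hcl h hrcC) hg
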